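/- In a TDMA policy where user i transmits at power pᵢ^t at slot t and user j transmits at power pⱼ^{t+s} at slot t+s (s ≠ 0), user j can transmit in both slots t and t+s with new powers so as to achieve at least the same total discounted throughput at a strictly lower total discounted energy consumption, regardless of the discount factor, if and only if pⱼ^{t+s}·g_{jj} > pᵢ^t·g_{ij}. -/

import Mathlib

-- e^y - 1 ≤ y e^y
lemma exp_sub_one_le' (y : ℝ) : Real.exp y - 1 ≤ y * Real.exp y := by
  have h1 : 1 - y ≤ Real.exp (-y) := by linarith [Real.add_one_le_exp (-y)]
  have h2 : Real.exp y * (1 - y) ≤ Real.exp y * Real.exp (-y) :=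
    mul_le_mul_of_nonneg_left h1 (Real.exp_pos y).le
  rw [← Real.exp_add] at h2
  simp at h2
  nlinarith [h2]

-- y e^{-y} ≤ 1 - e^{-y}
lemma one_sub_exp_neg_ge' (y : ℝ) : y * Real.exp (-y) ≤ 1 - Real.exp (-y) := by
  have h1 : 1 + y ≤ Real.exp y := by linarith [Real.add_one_le_exp y]
  have h2 : Real.exp (-y) * (1 + y) ≤ Real.exp (-y) * Real.exp y :=
    mul_le_mul_of_nonneg_left h1 (Real.exp_pos (-y)).le
  rw [← Real.exp_add] at h2
  simp at h2
  nlinarith [h2]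

-- log z ≥ 1 - 1/z for z > 0
lemma log_ge_one_sub_inv' {z : ℝ} (hz : 0 < z) : 1 - 1/z ≤ Real.log z := by
  have h := Real.log_le_sub_one_of_pos (show (0:ℝ) < 1/z by positivity)
  rw [Real.log_div one_ne_zero hz.ne'] at h
  simp at h
  rw [one_div]
  linarith

set_option maxHeartbeats 800000 in
theorem stmt_4 (gjj gij σ2 pi pj : ℝ) (hgjj : 0 < gjj) (hgij : 0 < gij) (hσ : 0 < σ2)
    (hpi : 0 ≤ pi) (hpj : 0 ≤ pj) (t₁ t₂ : ℕ) (hts : t₁ ≠ t₂) :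
    (∀ δ : ℝ, 0 < δ → δ < 1 →
      ∃ q₁ q₂ : ℝ, 0 ≤ q₁ ∧ 0 ≤ q₂ ∧
        δ ^ t₂ * Real.logb 2 (1 + pj * gjj / σ2) ≤
          δ ^ t₁ * Real.logb 2 (1 + q₁ * gjj / (pi * gij + σ2)) +
          δ ^ t₂ * Real.logb 2 (1 + q₂ * gjj / σ2) ∧
        δ ^ t₁ * q₁ + δ ^ t₂ * q₂ < δ ^ t₂ * pj) ↔
    pi * gij < pj * gjj := by
  have hL : (0:ℝ) < Real.log 2 := Real.log_pos (by norm_num)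
  set L := Real.log 2 with hLdef
  have hB0 : 0 < pi * gij + σ2 := by positivity
  have hA0 : 0 < pj * gjj + σ2 := by positivity
  constructor
  · -- forward
    intro h
    by_contra hcon
    push_neg at hcon  -- pj*gjj ≤ pi*gij
    obtain ⟨q₁, q₂, hq₁, hq₂, hthr, hen⟩ := h (1/2) (by norm_num) (by norm_num)
    set d1 := ((1:ℝ)/2) ^ t₁ with hd1def
    set d2 := ((1:ℝ)/2) ^ t₂ with hd2def
    have hd1 : 0 < d1 := by positivity
    have hd2 : 0 < d2 := by positivity
    set A := pj * gjj + σ2 with hAdef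
    set B := pi * gij + σ2 with hBdef
    have hAB : A ≤ B := by simp only [hAdef, hBdef]; linarith
    -- upper bound on slot-1 log
    have hub : Real.logb 2 (1 + q₁ * gjj / B) ≤ q₁ * gjj / (B * L) := by
      have h1 : (0:ℝ) < 1 + q₁ * gjj / B := by positivity
      have hlog : Real.log (1 + q₁ * gjj / B) ≤ q₁ * gjj / B := by
        have := Real.log_le_sub_one_of_pos h1; linarith
      rw [Real.logb, ← hLdef, show q₁ * gjj / (B * L) = (q₁ * gjj / B) / L from by
        rw [div_div]]
      gcongr
    -- lower bound on the log difference
    have hq2p : 0 < σ2 + q₂ * gjj := by positivity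
    have hlb : (pj - q₂) * gjj / (A * L) ≤
        Real.logb 2 (1 + pj * gjj / σ2) - Real.logb 2 (1 + q₂ * gjj / σ2) := by
      have e0 : Real.logb 2 (1 + pj * gjj / σ2) - Real.logb 2 (1 + q₂ * gjj / σ2)
          = (Real.log A - Real.log (σ2 + q₂ * gjj)) / L := by
        rw [show 1 + pj * gjj / σ2 = A / σ2 from by rw [hAdef]; field_simp; ring,
          show 1 + q₂ * gjj / σ2 = (σ2 + q₂ * gjj) / σ2 from by field_simp,
          Real.logb, Real.logb, ← hLdef,
          Real.log_div hA0.ne' hσ.ne', Real.log_div hq2p.ne' hσ.ne']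
        ring
      have key : (pj - q₂) * gjj / A ≤ Real.log A - Real.log (σ2 + q₂ * gjj) := by
        have hz : 0 < A / (σ2 + q₂ * gjj) := by positivity
        have h1 := log_ge_one_sub_inv' hz
        rw [Real.log_div hA0.ne' hq2p.ne', one_div_div] at h1
        have e3 : 1 - (σ2 + q₂ * gjj) / A = (pj - q₂) * gjj / A := by
          rw [hAdef]; field_simp; ring
        linarith [e3 ▸ h1]
      rw [e0, show (pj - q₂) * gjj / (A * L) = ((pj - q₂) * gjj / A) / L from by
        rw [div_div]]
      gcongr
    -- combine
    have h1 : d2 * ((pj - q₂) * gjj / (A * L)) ≤ d1 * (q₁ * gjj / (A * L)) := by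
      have s1 : d2 * ((pj - q₂) * gjj / (A * L)) ≤ d1 * Real.logb 2 (1 + q₁ * gjj / B) := by
        have := mul_le_mul_of_nonneg_left hlb hd2.le
        linarith [hthr]
      have s2 : d1 * Real.logb 2 (1 + q₁ * gjj / B) ≤ d1 * (q₁ * gjj / (B * L)) :=
        mul_le_mul_of_nonneg_left hub hd1.le
      have s3 : d1 * (q₁ * gjj / (B * L)) ≤ d1 * (q₁ * gjj / (A * L)) := by
        gcongr
      linarith
    have h2 : d2 * (pj - q₂) ≤ d1 * q₁ := by
      have hpos : (0:ℝ) < gjj / (A * L) := by positivity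
      have h3 : (d2 * (pj - q₂)) * (gjj / (A * L)) ≤ (d1 * q₁) * (gjj / (A * L)) := by
        calc (d2 * (pj - q₂)) * (gjj / (A * L)) = d2 * ((pj - q₂) * gjj / (A * L)) := by
              ring
          _ ≤ d1 * (q₁ * gjj / (A * L)) := h1
          _ = (d1 * q₁) * (gjj / (A * L)) := by ring
      exact le_of_mul_le_mul_right h3 hpos
    linarith
  · -- backward
    intro h δ hδ0 hδ1
    set A := pj * gjj + σ2 with hAdef
    set B := pi * gij + σ2 with hBdef
    have hBA : B < A := by simp only [hAdef, hBdef]; linarith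
    have hd1 : 0 < δ ^ t₁ := pow_pos hδ0 _
    have hd2 : 0 < δ ^ t₂ := pow_pos hδ0 _
    set c := δ ^ t₂ / δ ^ t₁ with hcdef
    have hc : 0 < c := by positivity
    have hcd : δ ^ t₁ * c = δ ^ t₂ := by rw [hcdef]; field_simp
    have hABr : 1 < A / B := (one_lt_div hB0).mpr hBA
    set a := Real.log (A / B) / (2 * (c + 1) * L) with hadef
    have ha : 0 < a := div_pos (Real.log_pos hABr) (by positivity)
    have haL : 0 < a * L := by positivity
    have hkey : Real.exp ((c + 1) * (a * L)) < A / B := by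
      have e : (c + 1) * (a * L) = Real.log (A / B) / 2 := by
        rw [hadef]; field_simp
      rw [e]
      have hlog : 0 < Real.log (A / B) := Real.log_pos hABr
      calc Real.exp (Real.log (A / B) / 2) < Real.exp (Real.log (A / B)) :=
            Real.exp_lt_exp.mpr (by linarith)
        _ = A / B := Real.exp_log (by positivity)
    have hE : Real.exp (a * L) * Real.exp (-(a * L)) = 1 := by
      rw [← Real.exp_add]; simp
    have hkey2 : B * Real.exp (c * (a * L)) < A * Real.exp (-(a * L)) := by
      have h1 : Real.exp ((c + 1) * (a * L))
          = Real.exp (c * (a * L)) * Real.exp (a * L) := by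
        rw [← Real.exp_add]; ring_nf
      have h2 : B * (Real.exp (c * (a * L)) * Real.exp (a * L)) < A := by
        rw [← h1]
        linarith [(lt_div_iff₀ hB0).mp hkey]
      have h3 := mul_lt_mul_of_pos_right h2 (Real.exp_pos (-(a * L)))
      have h4 : B * (Real.exp (c * (a * L)) * Real.exp (a * L)) * Real.exp (-(a * L))
          = B * Real.exp (c * (a * L)) := by
        linear_combination (B * Real.exp (c * (a * L))) * hE
      rw [h4] at h3
      exact h3
    have hq2pos : σ2 < A * Real.exp (-(a * L)) := by
      have h1 : Real.exp (a * L) < Real.exp ((c + 1) * (a * L)) := by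
        apply Real.exp_lt_exp.mpr; nlinarith
      have hσB : σ2 ≤ B := by simp only [hBdef]; nlinarith
      have h2 : A / B ≤ A / σ2 := by
        rw [div_le_div_iff₀ hB0 hσ]
        nlinarith
      have h3 : σ2 * Real.exp (a * L) < A := by
        have := lt_of_lt_of_le (lt_trans h1 hkey) h2
        rw [lt_div_iff₀ hσ] at this
        linarith
      have h4 := mul_lt_mul_of_pos_right h3 (Real.exp_pos (-(a * L)))
      have h5 : σ2 * Real.exp (a * L) * Real.exp (-(a * L)) = σ2 := by
        linear_combination σ2 * hE
      rw [h5] at h4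
      exact h4
    set E1 := Real.exp (c * (a * L)) with hE1def
    set E2 := Real.exp (-(a * L)) with hE2def
    have hE1ge : 1 ≤ E1 := Real.one_le_exp (by positivity)
    refine ⟨B * (E1 - 1) / gjj, (A * E2 - σ2) / gjj, ?_, ?_, ?_, ?_⟩
    · exact div_nonneg (mul_nonneg hB0.le (by linarith)) hgjj.le
    · exact div_nonneg (by linarith) hgjj.le
    · -- throughput
      have hT1 : 1 + (B * (E1 - 1) / gjj) * gjj / B = E1 := by
        field_simp
        ring
      have hT2 : 1 + ((A * E2 - σ2) / gjj) * gjj / σ2 = A * E2 / σ2 := by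
        field_simp
        ring
      have hT0 : 1 + pj * gjj / σ2 = A / σ2 := by
        rw [hAdef]; field_simp; ring
      have hlogb1 : Real.logb 2 E1 = c * a := by
        rw [hE1def, Real.logb, Real.log_exp, ← hLdef]
        field_simp
      have hlogb2 : Real.logb 2 (A * E2 / σ2) = Real.logb 2 (A / σ2) - a := by
        rw [hE2def, Real.logb, Real.logb, ← hLdef,
          Real.log_div (by positivity) hσ.ne',
          Real.log_mul hA0.ne' (Real.exp_ne_zero _), Real.log_exp,
          Real.log_div hA0.ne' hσ.ne']
        linear_combination (-a) * mul_inv_cancel₀ hL.ne'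
      rw [hT1, hT2, hT0, hlogb1, hlogb2]
      apply le_of_eq
      linear_combination -a * hcd
    · -- energy
      have k1 : E1 - 1 ≤ (c * (a * L)) * E1 := exp_sub_one_le' _
      have k2 : (a * L) * E2 ≤ 1 - E2 := one_sub_exp_neg_ge' _
      have main : δ ^ t₁ * (B * (E1 - 1)) < δ ^ t₂ * (A * (1 - E2)) := by
        calc δ ^ t₁ * (B * (E1 - 1)) ≤ δ ^ t₁ * (B * ((c * (a * L)) * E1)) := by
              apply mul_le_mul_of_nonneg_left _ hd1.le
              exact mul_le_mul_of_nonneg_left k1 hB0.le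
          _ = δ ^ t₂ * ((a * L) * (B * E1)) := by rw [← hcd]; ring
          _ < δ ^ t₂ * ((a * L) * (A * E2)) := by
              apply mul_lt_mul_of_pos_left _ hd2
              exact mul_lt_mul_of_pos_left hkey2 haL
          _ = δ ^ t₂ * (A * ((a * L) * E2)) := by ring
          _ ≤ δ ^ t₂ * (A * (1 - E2)) := by
              apply mul_le_mul_of_nonneg_left _ hd2.le
              exact mul_le_mul_of_nonneg_left k2 hA0.le
      have e1 : δ ^ t₁ * (B * (E1 - 1) / gjj) = (δ ^ t₁ * (B * (E1 - 1))) / gjj := by ring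
      have e2 : δ ^ t₂ * ((A * E2 - σ2) / gjj)
          = (δ ^ t₂ * (A * E2) - δ ^ t₂ * σ2) / gjj := by ring
      have e3 : δ ^ t₂ * pj
          = (δ ^ t₂ * (A * (1 - E2)) + δ ^ t₂ * (A * E2) - δ ^ t₂ * σ2) / gjj := by
        rw [hAdef]; field_simp; ring
      rw [e1, e2, e3, ← add_div, div_lt_div_iff_of_pos_right hgjj]
      linarith
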